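/- arXiv:1607.01872 — 2 statements merged into one kernel-verified Lean document; each statement's English description precedes it below -/
import Mathlib

section
/- The matching produced by the MMQ algorithm is Pareto optimal among feasible matchings: there is no other feasible matching π' such that every user weakly prefers its base station under π' to its base station under π (with respect to its preference order), with at least one user strictly preferring π'. -/
/-- Load of base station `n` under a partial assignment `π`. -/
def bsLoad {M N : Type*} [Fintype M] [DecidableEq N] (π : M → Option N) (n : N) : ℕ :=
  (Finset.univ.filter (fun m => π m = some n)).card

/-- The MMQ (matching with minimum quotas) serial-dictatorship run: users are processed
in master-list order; while the number of remaining users exceeds the total unmet minimum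
quota (phase 1), each user goes to its most preferred (lowest `rank`) base station whose
load is below its maximum quota; once the remaining users exactly fill the unmet minimum
quotas (phase 2), each user goes to its most preferred base station whose load is below
its minimum quota. -/
noncomputable def mmqRun {M N : Type*} [Fintype M] [Fintype N] [DecidableEq M] [DecidableEq N]
    (qmin qmax : N → ℕ) (rank : M → N → ℕ) :
    List M → (M → Option N) → (M → Option N)
  | [], π => π
  | m :: rest, π =>
      let κ := bsLoad π
      let deficit := ∑ n : N, (qmin n - κ n)
      let allowed : Finset N :=
        if rest.length + 1 = deficit then Finset.univ.filter (fun n => κ n < qmin n)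
        else Finset.univ.filter (fun n => κ n < qmax n)
      match allowed.toList.argmin (rank m) with
      | some n => mmqRun qmin qmax rank rest (Function.update π m (some n))
      | none => mmqRun qmin qmax rank rest π

section
variable {M N : Type*} [Fintype M] [Fintype N] [DecidableEq M] [DecidableEq N]

def mmqAllowed (qmin qmax : N → ℕ) (π : M → Option N) (len : ℕ) : Finset N :=
  if len + 1 = ∑ n : N, (qmin n - bsLoad π n) then Finset.univ.filter (fun n => bsLoad π n < qmin n)
  else Finset.univ.filter (fun n => bsLoad π n < qmax n)

variable (qmin qmax : N → ℕ) (rank : M → N → ℕ)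

lemma mmqRun_cons (m : M) (rest : List M) (π : M → Option N) :
    mmqRun qmin qmax rank (m :: rest) π =
      match (mmqAllowed qmin qmax π rest.length).toList.argmin (rank m) with
      | some n => mmqRun qmin qmax rank rest (Function.update π m (some n))
      | none => mmqRun qmin qmax rank rest π := by
  rw [mmqRun, mmqAllowed]

lemma mmqRun_nil (π : M → Option N) : mmqRun qmin qmax rank [] π = π := by rw [mmqRun]

lemma mmqRun_unmoved : ∀ (rest : List M) (π : M → Option N) (m : M), m ∉ rest →
    mmqRun qmin qmax rank rest π m = π m := by
  intro rest
  induction rest with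
  | nil => intro π m _; rw [mmqRun_nil]
  | cons a rest ih =>
    intro π m hm
    rw [mmqRun_cons]
    have hma : m ≠ a := fun h => hm (h ▸ (List.mem_cons_self : a ∈ a :: rest))
    have hmr : m ∉ rest := fun h => hm (List.mem_cons_of_mem a h)
    cases harg : (mmqAllowed qmin qmax π rest.length).toList.argmin (rank a) with
    | none => exact ih π m hmr
    | some n =>
      show mmqRun qmin qmax rank rest (Function.update π a (some n)) m = π m
      rw [ih _ m hmr, Function.update_of_ne hma]

lemma bsLoad_update (π : M → Option N) (m : M) (hm : π m = none) (n₀ n : N) :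
    bsLoad (Function.update π m (some n₀)) n = bsLoad π n + if n₀ = n then 1 else 0 := by
  unfold bsLoad
  by_cases h : n₀ = n
  · subst h
    have : Finset.univ.filter (fun m' => Function.update π m (some n₀) m' = some n₀)
        = insert m (Finset.univ.filter (fun m' => π m' = some n₀)) := by
      ext m'
      by_cases hm' : m' = m
      · subst hm'; simp [Function.update_self]
      · simp [Function.update_of_ne hm', hm']
    rw [this, Finset.card_insert_of_notMem (by simp [hm]), if_pos rfl]
  · rw [if_neg h]
    congr 1
    ext m'
    by_cases hm' : m' = m
    · subst hm'; simp [Function.update_self, hm, h]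
    · simp [Function.update_of_ne hm']

lemma sum_bsLoad [Nonempty N] (π : M → Option N) :
    ∑ n : N, bsLoad π n = (Finset.univ.filter (fun m => π m ≠ none)).card := by
  classical
  have := Finset.card_eq_sum_card_fiberwise
    (f := fun m => (π m).getD (Classical.arbitrary N))
    (s := Finset.univ.filter (fun m => π m ≠ none)) (t := Finset.univ)
    (fun x _ => Finset.mem_univ _)
  rw [this]
  apply Finset.sum_congr rfl
  intro n _
  unfold bsLoad
  congr 1
  ext m
  cases hm : π m <;> simp [hm]

lemma mmq_key (hrank : ∀ m : M, Function.Injective (rank m))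
    (hhigh : Fintype.card M ≤ ∑ n : N, qmax n)
    (π' : M → N)
    (hfeas₁ : ∀ n, qmin n ≤ (Finset.univ.filter (fun m => π' m = n)).card)
    (hfeas₂ : ∀ n, (Finset.univ.filter (fun m => π' m = n)).card ≤ qmax n) :
    ∀ (rest : List M) (π₀ : M → Option N),
      rest.Nodup →
      (∀ m, π₀ m = none ↔ m ∈ rest) →
      (∀ m n, π₀ m = some n → π' m = n) →
      (∑ n : N, (qmin n - bsLoad π₀ n)) ≤ rest.length →
      (∀ m n, mmqRun qmin qmax rank rest π₀ m = some n → rank m (π' m) ≤ rank m n) →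
      ¬ ∃ m n, mmqRun qmin qmax rank rest π₀ m = some n ∧ rank m (π' m) < rank m n := by
  intro rest
  induction rest with
  | nil =>
    intro π₀ _ hnone hagree _ _ ⟨m, n, hmn, hlt⟩
    rw [mmqRun_nil] at hmn
    have := hagree m n hmn
    rw [this] at hlt
    exact lt_irrefl _ hlt
  | cons m rest IH =>
    intro π₀ hnd hnone hagree hdef hweak hstrict
    -- the allowed set is nonempty
    have hNne : Nonempty N := by
      by_contra h
      rw [not_nonempty_iff] at h
      have : (Finset.univ : Finset N) = ∅ := Finset.univ_eq_empty
      rw [this, Finset.sum_empty] at hhigh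
      have : m ∈ Finset.univ.filter (fun _ : M => True) := by simp
      have hcard : 0 < Fintype.card M := Fintype.card_pos_iff.mpr ⟨m⟩
      omega
    haveI := hNne
    -- cardinality facts
    have hsub : (m :: rest).toFinset ⊆ Finset.univ.filter (fun m' => π₀ m' = none) := by
      intro m' hm'
      simp only [Finset.mem_filter, Finset.mem_univ, true_and]
      exact (hnone m').mpr (List.mem_toFinset.mp hm')
    have hcard_rest : (m :: rest).toFinset.card = rest.length + 1 := by
      rw [List.toFinset_card_of_nodup hnd]; simp
    have hsum_load : ∑ n : N, bsLoad π₀ n + (rest.length + 1) ≤ Fintype.card M := by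
      rw [sum_bsLoad]
      have h1 := Finset.card_le_card hsub
      have h2 := Finset.card_filter_add_card_filter_not
        (s := (Finset.univ : Finset M)) (p := fun m' => π₀ m' = none)
      rw [Finset.card_univ] at h2
      have h3 : (Finset.univ.filter (fun m' => ¬ π₀ m' = none)).card
          = (Finset.univ.filter (fun m' => π₀ m' ≠ none)).card := rfl
      omega
    have hne : (mmqAllowed qmin qmax π₀ rest.length).Nonempty := by
      unfold mmqAllowed
      by_cases hph : rest.length + 1 = ∑ n : N, (qmin n - bsLoad π₀ n)
      · rw [if_pos hph]
        by_contra h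
        rw [Finset.not_nonempty_iff_eq_empty, Finset.filter_eq_empty_iff] at h
        have : ∑ n : N, (qmin n - bsLoad π₀ n) = 0 :=
          Finset.sum_eq_zero (fun n _ => by have := h (Finset.mem_univ n); omega)
        omega
      · rw [if_neg hph]
        by_contra h
        rw [Finset.not_nonempty_iff_eq_empty, Finset.filter_eq_empty_iff] at h
        have : ∑ n : N, qmax n ≤ ∑ n : N, bsLoad π₀ n :=
          Finset.sum_le_sum (fun n _ => by have := h (Finset.mem_univ n); omega)
        omega
    obtain ⟨n₀, hn₀arg⟩ : ∃ n₀, (mmqAllowed qmin qmax π₀ rest.length).toList.argmin (rank m) = some n₀ := by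
      cases harg : (mmqAllowed qmin qmax π₀ rest.length).toList.argmin (rank m) with
      | none =>
        rw [List.argmin_eq_none, Finset.toList_eq_nil] at harg
        exact absurd harg (Finset.nonempty_iff_ne_empty.mp hne)
      | some n₀ => exact ⟨n₀, rfl⟩
    have hn₀mem : n₀ ∈ mmqAllowed qmin qmax π₀ rest.length :=
      Finset.mem_toList.mp (List.argmin_mem hn₀arg)
    have hn₀min : ∀ n ∈ mmqAllowed qmin qmax π₀ rest.length, rank m n₀ ≤ rank m n :=
      fun n hn => List.le_of_mem_argmin (Finset.mem_toList.mpr hn) hn₀arg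
    have hrun : mmqRun qmin qmax rank (m :: rest) π₀
        = mmqRun qmin qmax rank rest (Function.update π₀ m (some n₀)) := by
      rw [mmqRun_cons, hn₀arg]
    rw [hrun] at hweak hstrict
    have hm_none : π₀ m = none := (hnone m).mpr ((List.mem_cons_self : m ∈ m :: rest))
    have hm_rest : m ∉ rest := (List.nodup_cons.mp hnd).1
    have hκ' : ∀ n, bsLoad (Function.update π₀ m (some n₀)) n
        = bsLoad π₀ n + if n₀ = n then 1 else 0 := bsLoad_update π₀ m hm_none n₀
    -- final assignment of m
    have hfinal_m : mmqRun qmin qmax rank rest (Function.update π₀ m (some n₀)) m = some n₀ := by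
      rw [mmqRun_unmoved qmin qmax rank rest _ m hm_rest, Function.update_self]
    by_cases hmn₀ : π' m = n₀
    · -- m agrees with π'; recurse
      refine IH (Function.update π₀ m (some n₀)) (List.nodup_cons.mp hnd).2 ?_ ?_ ?_ hweak hstrict
      · intro m'
        by_cases hm' : m' = m
        · subst hm'; simp [Function.update_self, hm_rest]
        · rw [Function.update_of_ne hm', hnone m', List.mem_cons]
          constructor
          · rintro (h | h)
            · exact absurd h hm'
            · exact h
          · intro h
            exact Or.inr h
      · intro m' n hm'n
        by_cases hm' : m' = m
        · subst hm'; rw [Function.update_self] at hm'n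
          rw [hmn₀]
          exact Option.some_inj.mp hm'n
        · rw [Function.update_of_ne hm'] at hm'n; exact hagree m' n hm'n
      · -- deficit bound for the updated assignment
        have e1 : ∀ (g : N → ℕ), ∑ n : N, g n = g n₀ + ∑ n ∈ Finset.univ.erase n₀, g n :=
          fun g => (Finset.add_sum_erase _ g (Finset.mem_univ n₀)).symm
        have hE : ∑ n ∈ Finset.univ.erase n₀, (qmin n - bsLoad (Function.update π₀ m (some n₀)) n)
            = ∑ n ∈ Finset.univ.erase n₀, (qmin n - bsLoad π₀ n) := by
          apply Finset.sum_congr rfl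
          intro n hn
          rw [hκ' n, if_neg (Finset.ne_of_mem_erase hn).symm, Nat.add_zero]
        rw [e1, hE, hκ' n₀, if_pos rfl]
        unfold mmqAllowed at hn₀mem
        by_cases hph : rest.length + 1 = ∑ n : N, (qmin n - bsLoad π₀ n)
        · rw [if_pos hph] at hn₀mem
          simp only [Finset.mem_filter] at hn₀mem
          rw [e1 (fun n => qmin n - bsLoad π₀ n)] at hph
          omega
        · rw [e1 (fun n => qmin n - bsLoad π₀ n)] at hdef hph
          simp only [List.length_cons] at hdef
          omega
    · -- m strictly improves: contradiction with feasibility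
      have hle : rank m (π' m) ≤ rank m n₀ := hweak m n₀ hfinal_m
      have hlt : rank m (π' m) < rank m n₀ :=
        lt_of_le_of_ne hle (fun h => hmn₀ (hrank m h))
      have hnotmem : π' m ∉ mmqAllowed qmin qmax π₀ rest.length :=
        fun h => absurd (hn₀min _ h) (not_le.mpr hlt)
      -- split of π' loads
      have hsplit : ∀ n, (Finset.univ.filter (fun m' => π' m' = n)).card
          = bsLoad π₀ n + ((m :: rest).toFinset.filter (fun m' => π' m' = n)).card := by
        intro n
        have hun : Finset.univ.filter (fun m' => π' m' = n)
            = (Finset.univ.filter (fun m' => π₀ m' = some n))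
              ∪ ((m :: rest).toFinset.filter (fun m' => π' m' = n)) := by
          ext m'
          simp only [Finset.mem_filter, Finset.mem_univ, true_and, Finset.mem_union,
            List.mem_toFinset]
          constructor
          · intro h
            cases hm' : π₀ m' with
            | none => exact Or.inr ⟨(hnone m').mp hm', h⟩
            | some k =>
              left
              have hk : k = n := (hagree m' k hm').symm.trans h
              simp [hm', hk]
          · rintro (h | ⟨_, h⟩)
            · exact hagree m' n h
            · exact h
        have hdisj : Disjoint (Finset.univ.filter (fun m' => π₀ m' = some n))
            ((m :: rest).toFinset.filter (fun m' => π' m' = n)) := by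
          rw [Finset.disjoint_left]
          intro m' h1 h2
          simp only [Finset.mem_filter, Finset.mem_univ, true_and, List.mem_toFinset] at h1 h2
          rw [(hnone m').mpr h2.1] at h1
          cases h1
        rw [hun, Finset.card_union_of_disjoint hdisj]
        rfl
      have hsumr : ∑ n : N, ((m :: rest).toFinset.filter (fun m' => π' m' = n)).card
          = rest.length + 1 := by
        rw [← hcard_rest]
        exact (Finset.card_eq_sum_card_fiberwise (fun x _ => Finset.mem_univ (π' x))).symm
      unfold mmqAllowed at hnotmem
      by_cases hph : rest.length + 1 = ∑ n : N, (qmin n - bsLoad π₀ n)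
      · -- phase 2
        rw [if_pos hph] at hnotmem
        simp only [Finset.mem_filter, Finset.mem_univ, true_and, not_lt] at hnotmem
        -- strict sum inequality
        have hlt_sum : ∑ n : N, (qmin n - bsLoad π₀ n)
            < ∑ n : N, ((m :: rest).toFinset.filter (fun m' => π' m' = n)).card := by
          apply Finset.sum_lt_sum
          · intro n _
            have := hfeas₁ n
            rw [hsplit n] at this
            omega
          · refine ⟨π' m, Finset.mem_univ _, ?_⟩
            have hmem : m ∈ (m :: rest).toFinset.filter (fun m' => π' m' = π' m) := by
              simp
            have hpos : 0 < ((m :: rest).toFinset.filter (fun m' => π' m' = π' m)).card :=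
              Finset.card_pos.mpr ⟨m, hmem⟩
            omega
        omega
      · -- phase 1
        rw [if_neg hph] at hnotmem
        simp only [Finset.mem_filter, Finset.mem_univ, true_and, not_lt] at hnotmem
        have h1 := hfeas₂ (π' m)
        rw [hsplit (π' m)] at h1
        have hmem : m ∈ (m :: rest).toFinset.filter (fun m' => π' m' = π' m) := by simp
        have hpos : 0 < ((m :: rest).toFinset.filter (fun m' => π' m' = π' m)).card :=
          Finset.card_pos.mpr ⟨m, hmem⟩
        omega
end

/-- The MMQ outcome is Pareto optimal among feasible matchings: no feasible matching `π'`
weakly improves every user's base station (w.r.t. its preference ranking, lower `rank`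
being better) while strictly improving some user's. -/
theorem mmq_pareto_optimal {M N : Type*} [Fintype M] [Fintype N]
    [DecidableEq M] [DecidableEq N]
    (qmin qmax : N → ℕ) (rank : M → N → ℕ)
    (hrank : ∀ m : M, Function.Injective (rank m))
    (hq : ∀ n, qmin n ≤ qmax n)
    (hlow : ∑ n : N, qmin n ≤ Fintype.card M)
    (hhigh : Fintype.card M ≤ ∑ n : N, qmax n)
    (ml : List M) (hml : ml.Nodup) (hfull : ∀ m : M, m ∈ ml) :
    ¬ ∃ π' : M → N,
      (∀ n : N, qmin n ≤ (Finset.univ.filter (fun m => π' m = n)).card ∧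
        (Finset.univ.filter (fun m => π' m = n)).card ≤ qmax n) ∧
      (∀ (m : M) (n : N), mmqRun qmin qmax rank ml (fun _ => none) m = some n →
        rank m (π' m) ≤ rank m n) ∧
      (∃ (m : M) (n : N), mmqRun qmin qmax rank ml (fun _ => none) m = some n ∧
        rank m (π' m) < rank m n) := by
  rintro ⟨π', hfeas, hweak, hstrict⟩
  have hlen : ml.length = Fintype.card M := by
    rw [← List.toFinset_card_of_nodup hml]
    congr 1
    exact Finset.eq_univ_iff_forall.mpr (fun m => List.mem_toFinset.mpr (hfull m))
  have hload0 : ∀ n : N, bsLoad (fun _ : M => (none : Option N)) n = 0 := by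
    intro n; unfold bsLoad; simp
  refine mmq_key qmin qmax rank hrank hhigh π' (fun n => (hfeas n).1) (fun n => (hfeas n).2)
    ml (fun _ => none) hml (fun m => by simp [hfull m]) (fun m n h => by cases h)
    ?_ hweak hstrict
  simp only [hload0, Nat.sub_zero]
  omega
end

section
/- The matching produced by the MMQ algorithm is two-sided stable when all base stations rank users by the common master list ≻_ML: there is no user-base-station pair (m, n) with π(m) ≠ n such that n ≻_m π(m) and m ≻_ML m' for some m' ∈ π⁻¹(n). -/
set_option linter.unusedSectionVars false
section
variable {M N : Type*} [Fintype M] [Fintype N] [DecidableEq M] [DecidableEq N]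
variable (qmin qmax : N → ℕ) (rank : M → N → ℕ)

/-- the allowed set at a step -/
noncomputable def allowedAt (qmin qmax : N → ℕ) (π : M → Option N) (len : ℕ) : Finset N :=
  if len + 1 = ∑ n : N, (qmin n - bsLoad π n) then Finset.univ.filter (fun n => bsLoad π n < qmin n)
  else Finset.univ.filter (fun n => bsLoad π n < qmax n)

lemma mmq_cons (m : M) (rest : List M) (π : M → Option N) :
    mmqRun qmin qmax rank (m :: rest) π =
      match (allowedAt qmin qmax π rest.length).toList.argmin (rank m) with
      | some n => mmqRun qmin qmax rank rest (Function.update π m (some n))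
      | none => mmqRun qmin qmax rank rest π := by
  rw [mmqRun, allowedAt]

lemma mmq_not_mem (l : List M) (π : M → Option N) (m : M) (hm : m ∉ l) :
    mmqRun qmin qmax rank l π m = π m := by
  induction l generalizing π with
  | nil => rw [mmqRun]
  | cons a rest ih =>
    rw [mmq_cons]
    have ha : m ≠ a := fun h => hm (h ▸ (List.mem_cons_self (a := a) (l := rest)))
    have hr : m ∉ rest := fun h => hm (List.mem_cons_of_mem a h)
    rcases h : (allowedAt qmin qmax π rest.length).toList.argmin (rank a) with _ | n <;>
      dsimp only
    · exact ih π hr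
    · rw [ih _ hr, Function.update_of_ne ha]

lemma bsLoad_update_self (π : M → Option N) (m : M) (n : N) (hm : π m = none) :
    bsLoad (Function.update π m (some n)) n = bsLoad π n + 1 := by
  unfold bsLoad
  have : (Finset.univ.filter (fun x => Function.update π m (some n) x = some n))
      = insert m (Finset.univ.filter (fun x => π x = some n)) := by
    ext x
    rcases eq_or_ne x m with rfl | hx
    · simp
    · simp [Function.update_of_ne hx, hx]
  rw [this, Finset.card_insert_of_notMem (by simp [hm])]

lemma bsLoad_update_ne (π : M → Option N) (m : M) (n n' : N) (hm : π m = none)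
    (hn : n' ≠ n) : bsLoad (Function.update π m (some n')) n = bsLoad π n := by
  unfold bsLoad
  congr 1
  apply Finset.filter_congr
  intro x _
  rcases eq_or_ne x m with rfl | hx
  · simp [hm, hn]
  · simp [Function.update_of_ne hx]

lemma deficit_update (π : M → Option N) (m : M) (n' : N) (hm : π m = none)
    (hn' : bsLoad π n' < qmin n') :
    ∑ k : N, (qmin k - bsLoad (Function.update π m (some n')) k)
      = (∑ k : N, (qmin k - bsLoad π k)) - 1 := by
  rw [← Finset.add_sum_erase Finset.univ _ (Finset.mem_univ n'),
      ← Finset.add_sum_erase Finset.univ (fun k => qmin k - bsLoad π k) (Finset.mem_univ n')]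
  have h1 : ∑ k ∈ Finset.univ.erase n', (qmin k - bsLoad (Function.update π m (some n')) k)
      = ∑ k ∈ Finset.univ.erase n', (qmin k - bsLoad π k) := by
    refine Finset.sum_congr rfl fun k hk => ?_
    rw [bsLoad_update_ne π m k n' hm (Finset.ne_of_mem_erase hk).symm]
  rw [h1, bsLoad_update_self π m n' hm]
  omega

lemma mmq_blocked (hq : ∀ n, qmin n ≤ qmax n) :
    ∀ (l : List M) (π : M → Option N), l.Nodup → (∀ x ∈ l, π x = none) →
    ∀ n : N, (qmax n ≤ bsLoad π n ∨
      (l.length = ∑ k : N, (qmin k - bsLoad π k) ∧ qmin n ≤ bsLoad π n)) →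
    ∀ m' ∈ l, mmqRun qmin qmax rank l π m' ≠ some n := by
  intro l
  induction l with
  | nil => intro π _ _ n _ m' hm'; simp at hm'
  | cons a rest ih =>
    intro π hnd hnone n hblock m' hm'
    have hπa : π a = none := hnone a ((List.mem_cons_self (a := a) (l := rest)))
    rw [mmq_cons]
    rcases h : (allowedAt qmin qmax π rest.length).toList.argmin (rank a) with _ | c <;>
      dsimp only
    · rw [List.argmin_eq_none, Finset.toList_eq_nil] at h
      rcases hblock with hb | ⟨hlen, hge⟩
      · rcases List.mem_cons.mp hm' with rfl | hm'r
        · rw [mmq_not_mem _ _ _ rest π m' (List.nodup_cons.mp hnd).1, hπa]; simp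
        · exact ih π hnd.of_cons (fun x hx => hnone x (List.mem_cons_of_mem a hx)) n
            (Or.inl hb) m' hm'r
      · exfalso
        have hph : rest.length + 1 = ∑ k : N, (qmin k - bsLoad π k) := by
          simpa using hlen
        have hne : (∑ k : N, (qmin k - bsLoad π k)) ≠ 0 := by omega
        obtain ⟨k, -, hk⟩ := Finset.exists_ne_zero_of_sum_ne_zero hne
        have hkmem : k ∈ allowedAt qmin qmax π rest.length := by
          unfold allowedAt
          rw [if_pos hph]
          simp only [Finset.mem_filter]
          exact ⟨Finset.mem_univ k, by omega⟩
        rw [h] at hkmem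
        simp at hkmem
    · have hcmem : c ∈ List.argmin (rank a) (allowedAt qmin qmax π rest.length).toList := h ▸ rfl
      have hc : c ∈ allowedAt qmin qmax π rest.length :=
        Finset.mem_toList.mp (List.argmin_mem hcmem)
      have hnal : n ∉ allowedAt qmin qmax π rest.length := by
        unfold allowedAt
        split
        · next hph =>
          simp only [Finset.mem_filter]
          rintro ⟨-, hlt⟩
          rcases hblock with hb | ⟨-, hge⟩
          · have := hq n; omega
          · omega
        · next hph =>
          simp only [Finset.mem_filter]
          rintro ⟨-, hlt⟩
          rcases hblock with hb | ⟨hlen, -⟩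
          · omega
          · exact hph (by simpa using hlen)
      have hcn : c ≠ n := fun e => hnal (e ▸ hc)
      set π' := Function.update π a (some c) with hπ'
      have hπ'none : ∀ x ∈ rest, π' x = none := by
        intro x hx
        have hxa : x ≠ a := fun e => (List.nodup_cons.mp hnd).1 (e ▸ hx)
        rw [hπ', Function.update_of_ne hxa]
        exact hnone x (List.mem_cons_of_mem a hx)
      have hload : bsLoad π' n = bsLoad π n := bsLoad_update_ne π a n c hπa hcn
      have hblock' : qmax n ≤ bsLoad π' n ∨
          (rest.length = ∑ k : N, (qmin k - bsLoad π' k) ∧ qmin n ≤ bsLoad π' n) := by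
        rcases hblock with hb | ⟨hlen, hge⟩
        · left; omega
        · right
          have hph : rest.length + 1 = ∑ k : N, (qmin k - bsLoad π k) := by simpa using hlen
          have hc' : bsLoad π c < qmin c := by
            unfold allowedAt at hc
            rw [if_pos hph] at hc
            exact (Finset.mem_filter.mp hc).2
          rw [deficit_update qmin π a c hπa hc']
          omega
      rcases List.mem_cons.mp hm' with rfl | hm'r
      · rw [mmq_not_mem _ _ _ rest π' m' (List.nodup_cons.mp hnd).1]
        simp [hπ', hcn]
      · exact ih π' hnd.of_cons hπ'none n hblock' m' hm'r

lemma mmq_main (hq : ∀ n, qmin n ≤ qmax n) :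
    ∀ (l : List M) (π : M → Option N), l.Nodup → (∀ x ∈ l, π x = none) →
    ∀ (m m' : M) (n n0 : N), m ∈ l → m' ∈ l → l.idxOf m < l.idxOf m' →
    mmqRun qmin qmax rank l π m = some n0 → rank m n < rank m n0 →
    mmqRun qmin qmax rank l π m' ≠ some n := by
  intro l
  induction l with
  | nil => simp
  | cons a rest ih =>
    intro π hnd hnone m m' n n0 hm hm' hidx hmn0 hrk
    have hπa : π a = none := hnone a ((List.mem_cons_self (a := a) (l := rest)))
    have hm'a : m' ≠ a := by
      intro e; subst e
      rw [List.idxOf_cons_self] at hidx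
      omega
    have hm'r : m' ∈ rest := (List.mem_cons.mp hm').resolve_left hm'a
    have hanr : a ∉ rest := (List.nodup_cons.mp hnd).1
    rw [mmq_cons] at hmn0 ⊢
    rcases h : (allowedAt qmin qmax π rest.length).toList.argmin (rank a) with _ | c <;>
      rw [h] at hmn0 <;> dsimp only at hmn0 ⊢
    · rcases List.mem_cons.mp hm with rfl | hmr
      · rw [mmq_not_mem _ _ _ rest π m hanr, hπa] at hmn0
        exact absurd hmn0 (by simp)
      · have hma : m ≠ a := fun e => hanr (e ▸ hmr)
        refine ih π hnd.of_cons (fun x hx => hnone x (List.mem_cons_of_mem a hx))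
          m m' n n0 hmr hm'r ?_ hmn0 hrk
        rw [List.idxOf_cons_ne _ (Ne.symm hma), List.idxOf_cons_ne _ (Ne.symm hm'a)] at hidx
        omega
    · have hcmem : c ∈ List.argmin (rank a) (allowedAt qmin qmax π rest.length).toList := h ▸ rfl
      have hc : c ∈ allowedAt qmin qmax π rest.length :=
        Finset.mem_toList.mp (List.argmin_mem hcmem)
      set π' := Function.update π a (some c) with hπ'
      have hπ'none : ∀ x ∈ rest, π' x = none := by
        intro x hx
        have hxa : x ≠ a := fun e => hanr (e ▸ hx)
        rw [hπ', Function.update_of_ne hxa]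
        exact hnone x (List.mem_cons_of_mem a hx)
      rcases List.mem_cons.mp hm with rfl | hmr
      · -- m = a : its chosen station is n0
        rw [mmq_not_mem _ _ _ rest π' m hanr, hπ', Function.update_self] at hmn0
        have hc0 : c = n0 := by simpa using hmn0
        subst hc0
        have hnn0 : n ≠ c := fun e => by rw [e] at hrk; omega
        have hnal : n ∉ allowedAt qmin qmax π rest.length := by
          intro hna
          have := List.le_of_mem_argmin (Finset.mem_toList.mpr hna) hcmem
          omega
        have hload : bsLoad π' n = bsLoad π n := bsLoad_update_ne π m n c hπa (Ne.symm hnn0)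
        have hblock' : qmax n ≤ bsLoad π' n ∨
            (rest.length = ∑ k : N, (qmin k - bsLoad π' k) ∧ qmin n ≤ bsLoad π' n) := by
          unfold allowedAt at hnal hc
          by_cases hph : rest.length + 1 = ∑ k : N, (qmin k - bsLoad π k)
          · rw [if_pos hph] at hnal hc
            simp only [Finset.mem_filter, Finset.mem_univ, true_and, not_lt] at hnal hc
            right
            rw [deficit_update qmin π m c hπa hc]
            omega
          · rw [if_neg hph] at hnal
            simp only [Finset.mem_filter, Finset.mem_univ, true_and, not_lt] at hnal
            left
            omega
        exact mmq_blocked qmin qmax rank hq rest π' hnd.of_cons hπ'none n hblock' m' hm'r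
      · have hma : m ≠ a := fun e => hanr (e ▸ hmr)
        refine ih π' hnd.of_cons hπ'none m m' n n0 hmr hm'r ?_ hmn0 hrk
        rw [List.idxOf_cons_ne _ (Ne.symm hma), List.idxOf_cons_ne _ (Ne.symm hm'a)] at hidx
        omega

end

/-- The MMQ outcome is two-sided stable when all base stations rank users by the common
master list (earlier in the list `ml` = higher priority): there is no pair `(m, n)` with
`π m ≠ some n`, `m` strictly preferring `n` to its own base station, and some `m'`
matched to `n` with `m` preceding `m'` in the master list. -/
theorem mmq_stable {M N : Type*} [Fintype M] [Fintype N]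
    [DecidableEq M] [DecidableEq N]
    (qmin qmax : N → ℕ) (rank : M → N → ℕ)
    (hrank : ∀ m : M, Function.Injective (rank m))
    (hq : ∀ n, qmin n ≤ qmax n)
    (hlow : ∑ n : N, qmin n ≤ Fintype.card M)
    (hhigh : Fintype.card M ≤ ∑ n : N, qmax n)
    (ml : List M) (hml : ml.Nodup) (hfull : ∀ m : M, m ∈ ml) :
    ¬ ∃ (m : M) (n : N),
      mmqRun qmin qmax rank ml (fun _ => none) m ≠ some n ∧
      (∃ n0 : N, mmqRun qmin qmax rank ml (fun _ => none) m = some n0 ∧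
        rank m n < rank m n0) ∧
      (∃ m' : M, mmqRun qmin qmax rank ml (fun _ => none) m' = some n ∧
        ml.idxOf m < ml.idxOf m') := by
  rintro ⟨m, n, -, ⟨n0, hm0, hrk⟩, ⟨m', hm'n, hidx⟩⟩
  exact mmq_main qmin qmax rank hq ml (fun _ => none) hml (fun _ _ => rfl) m m' n n0
    (hfull m) (hfull m') hidx hm0 hrk hm'n
end
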